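/- Consider discrete mesh data with time levels n=0,…,N, per-face oriented velocities u_f^{n} with |u_f^{n}| ≤ M, per-face densities ρ_f^{n} ∈ (0,M], and cell energies e_K^{n} ∈ [1/M, M], for a real M>1. Set F_{K,f}^{n} = |σ_f|·ρ_f^{n}·u_{K,f}^{n}. For each internal face f and 1 ≤ n ≤ N let e_{KL,f}^{n} ∈ [[e_{K_f}^{n}, e_{L_f}^{n}]] be the tangent-intersection point of φ_e at e_{K_f}^{n} and e_{L_f}^{n} (equal to the common value when they coincide), and let the face energy e_f^{n} satisfy e_f^{n} ∈ [[e_{K_f}^{n}, e_{KL,f}^{n}]] if u_f^{n} ≥ 0 and e_f^{n} ∈ [[e_{L_f}^{n}, e_{KL,f}^{n}]] otherwise. Define (δφ_e)_f^{n} = φ_e(e_{K_f}^{n}) − φ_e(e_f^{n}) + φ_e'(e_{K_f}^{n})(e_{KL,f}^{n}−e_{K_f}^{n}) + (1/2)(φ_e'(e_{K_f}^{n})+φ_e'(e_{L_f}^{n}))·(e_f^{n}−e_{KL,f}^{n}) and |K|·(δR_e)_K^{n} = Σ_{f∈E(K)} (δφ_e)_f^{n}·F_{K,f}^{n}. Then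 for every h>0, G≥0 and every family of reals (ψ_K^{n}) such that |ψ_{K_f}^{n} − ψ_{L_f}^{n}| ≤ G·h for every internal face f and every n, one has |Σ_{n=0}^{N−1} δt Σ_{K∈C} |K|·(δR_e)_K^{n+1}·ψ_K^{n+1}| ≤ 3·M²·|φ_e'|_∞·G·h·Σ_{n=0}^{N−1} δt Σ_{f∈F} |σ_f|·|e_{K_f}^{n+1}−e_{L_f}^{n+1}|, where |φ_e'|_∞ = max(|φ_e'(1/M)|, |φ_e'(M)|). -/

import Mathlib

/-- `φ_e(z) = -log z / (γ-1)`. -/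
noncomputable def phiE (γ z : ℝ) : ℝ := -Real.log z / (γ - 1)

/-- `φ_e'(z) = -1/((γ-1) z)`. -/
noncomputable def phiE' (γ z : ℝ) : ℝ := -1 / ((γ - 1) * z)

/-- The set `E(K)` of faces incident to the cell `K`. -/
def cellFaces {Cell Face : Type*} [Fintype Face] [DecidableEq Cell]
    (Kf Lf : Face → Cell) (Kc : Cell) : Finset Face :=
  Finset.univ.filter (fun f => Kf f = Kc ∨ Lf f = Kc)

/-- Oriented normal velocity `u_{K,f}`: equal to `u_f` if `K = K_f` and to `-u_f`
if `K = L_f`. -/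
def orientedVel {Cell Face : Type*} [DecidableEq Cell]
    (Kf : Face → Cell) (uf : Face → ℝ) (Kc : Cell) (f : Face) : ℝ :=
  if Kf f = Kc then uf f else -uf f

/-- The per-face quantity `(δφ)_σ` of the reduced-diffusion remainder. -/
noncomputable def dphi (φ φ' : ℝ → ℝ) (xK xL xKL xσ : ℝ) : ℝ :=
  φ xK - φ xσ + φ' xK * (xKL - xK) + 1 / 2 * (φ' xK + φ' xL) * (xσ - xKL)

/-- Conservativity: summing the per-face fluxes over cells gives a face sum against
the jump of `ψ`. -/
lemma sum_cell_face {Cell Face : Type*} [Fintype Cell] [Fintype Face] [DecidableEq Cell]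
    (Kf Lf : Face → Cell) (hKL : ∀ f, Kf f ≠ Lf f) (u g : Face → ℝ) (ψ : Cell → ℝ) :
    ∑ Kc : Cell, (∑ f ∈ cellFaces Kf Lf Kc, g f * orientedVel Kf u Kc f) * ψ Kc
      = ∑ f : Face, g f * u f * (ψ (Kf f) - ψ (Lf f)) := by
  simp_rw [Finset.sum_mul, cellFaces, Finset.sum_filter]
  rw [Finset.sum_comm]
  refine Finset.sum_congr rfl fun f _ => ?_
  rw [← Finset.sum_filter]
  have hset : Finset.univ.filter (fun Kc => Kf f = Kc ∨ Lf f = Kc) = {Kf f, Lf f} := by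
    ext Kc
    simp [eq_comm]
  rw [hset, Finset.sum_pair (hKL f)]
  simp [orientedVel, hKL f]
  ring

/-- The derivative of `φ_e` is bounded on `[1/M, M]`. -/
lemma abs_phiE'_le {γ M z : ℝ} (hγ : 1 < γ) (hM : 1 < M) (hz : z ∈ Set.Icc (1 / M) M) :
    |phiE' γ z| ≤ max |phiE' γ (1 / M)| |phiE' γ M| := by
  refine le_trans ?_ (le_max_left _ _)
  have hM0 : (0 : ℝ) < M := lt_trans one_pos hM
  have hz0 : 0 < z := lt_of_lt_of_le (by positivity) hz.1
  have hγ1 : (0 : ℝ) < γ - 1 := by linarith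
  rw [phiE', phiE', abs_div, abs_div, abs_neg, abs_one,
    abs_of_pos (by positivity : (0:ℝ) < (γ - 1) * z),
    abs_of_pos (by positivity : (0:ℝ) < (γ - 1) * (1 / M))]
  apply one_div_le_one_div_of_le (by positivity)
  exact mul_le_mul_of_nonneg_left hz.1 (le_of_lt hγ1)

/-- Lipschitz bound for `log` on `[1/M, M]`. -/
lemma log_lip {M a b : ℝ} (hM : 1 < M) (ha : a ∈ Set.Icc (1 / M) M) (hb : b ∈ Set.Icc (1 / M) M) :
    |Real.log a - Real.log b| ≤ M * |a - b| := by
  have hM0 : (0 : ℝ) < M := lt_trans one_pos hM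
  have key : ∀ x y : ℝ, x ∈ Set.Icc (1 / M) M → y ∈ Set.Icc (1 / M) M → y ≤ x →
      Real.log x - Real.log y ≤ M * (x - y) := by
    intro x y hx hy hyx
    have hy0 : 0 < y := lt_of_lt_of_le (by positivity) hy.1
    have hx0 : 0 < x := lt_of_lt_of_le hy0 hyx
    have h1 : Real.log x - Real.log y = Real.log (x / y) :=
      (Real.log_div hx0.ne' hy0.ne').symm
    have h2 : Real.log (x / y) ≤ x / y - 1 := Real.log_le_sub_one_of_pos (by positivity)
    have h3 : x / y - 1 = (x - y) * (1 / y) := by field_simp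
    have h4 : 1 / y ≤ M := by
      rw [div_le_iff₀ hy0]
      calc (1 : ℝ) = M * (1 / M) := by field_simp
      _ ≤ M * y := by
        exact mul_le_mul_of_nonneg_left hy.1 (le_of_lt hM0)
    have h5 : (x - y) * (1 / y) ≤ (x - y) * M :=
      mul_le_mul_of_nonneg_left h4 (by linarith)
    calc Real.log x - Real.log y ≤ x / y - 1 := h1 ▸ h2
    _ = (x - y) * (1 / y) := h3
    _ ≤ (x - y) * M := h5
    _ = M * (x - y) := by ring
  rcases le_total b a with hba | hab
  · have h1 := key a b ha hb hba
    have h2 : Real.log b ≤ Real.log a := by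
      apply Real.log_le_log (lt_of_lt_of_le (by positivity) hb.1) hba
    rw [abs_of_nonneg (by linarith), abs_of_nonneg (by linarith)]
    linarith
  · have h1 := key b a hb ha hab
    have h2 : Real.log a ≤ Real.log b := by
      apply Real.log_le_log (lt_of_lt_of_le (by positivity) ha.1) hab
    rw [abs_of_nonpos (by linarith), abs_of_nonpos (by linarith)]
    linarith

/-- Lipschitz bound for `φ_e` on `[1/M, M]`, with constant `max |φ'(1/M)| |φ'(M)|`. -/
lemma phiE_lip {γ M a b : ℝ} (hγ : 1 < γ) (hM : 1 < M)
    (ha : a ∈ Set.Icc (1 / M) M) (hb : b ∈ Set.Icc (1 / M) M) :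
    |phiE γ a - phiE γ b| ≤ max |phiE' γ (1 / M)| |phiE' γ M| * |a - b| := by
  have hM0 : (0 : ℝ) < M := lt_trans one_pos hM
  have hγ1 : (0 : ℝ) < γ - 1 := by linarith
  have hval : M / (γ - 1) ≤ max |phiE' γ (1 / M)| |phiE' γ M| := by
    refine le_trans (le_of_eq ?_) (le_max_left _ _)
    rw [phiE', abs_div, abs_neg, abs_one,
      abs_of_pos (by positivity : (0:ℝ) < (γ - 1) * (1 / M))]
    field_simp
  have hdiff : phiE γ a - phiE γ b = (Real.log b - Real.log a) / (γ - 1) := by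
    rw [phiE, phiE]; ring
  calc |phiE γ a - phiE γ b| = |Real.log a - Real.log b| / (γ - 1) := by
        rw [hdiff, abs_div, abs_of_pos hγ1, abs_sub_comm]
  _ ≤ M * |a - b| / (γ - 1) := by
        exact div_le_div_of_nonneg_right (log_lip hM ha hb) hγ1.le
  _ = M / (γ - 1) * |a - b| := by ring
  _ ≤ max |phiE' γ (1 / M)| |phiE' γ M| * |a - b| :=
        mul_le_mul_of_nonneg_right hval (abs_nonneg _)

/-- Per-face bound on `(δφ)_σ`. -/
lemma dphi_bound {γ M : ℝ} (hγ : 1 < γ) (hM : 1 < M) {xK xL xKL xσ : ℝ}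
    (hK : xK ∈ Set.Icc (1 / M) M) (hL : xL ∈ Set.Icc (1 / M) M)
    (hKLm : xKL ∈ Set.uIcc xK xL) (hσm : xσ ∈ Set.uIcc xK xL) :
    |dphi (phiE γ) (phiE' γ) xK xL xKL xσ|
      ≤ 3 * max |phiE' γ (1 / M)| |phiE' γ M| * |xK - xL| := by
  set Φ := max |phiE' γ (1 / M)| |phiE' γ M| with hΦ
  have hsub : Set.uIcc xK xL ⊆ Set.Icc (1 / M) M := Set.uIcc_subset_Icc hK hL
  have hKLi : xKL ∈ Set.Icc (1 / M) M := hsub hKLm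
  have hσi : xσ ∈ Set.Icc (1 / M) M := hsub hσm
  have hd1 : |xKL - xK| ≤ |xL - xK| :=
    Set.abs_sub_le_of_uIcc_subset_uIcc
      (Set.uIcc_subset_uIcc Set.left_mem_uIcc hKLm)
  have hd2 : |xσ - xKL| ≤ |xL - xK| :=
    Set.abs_sub_le_of_uIcc_subset_uIcc (Set.uIcc_subset_uIcc hKLm hσm)
  have hd3 : |xK - xσ| ≤ |xL - xK| :=
    Set.abs_sub_le_of_uIcc_subset_uIcc
      (Set.uIcc_subset_uIcc hσm Set.left_mem_uIcc)
  have hΦK : |phiE' γ xK| ≤ Φ := abs_phiE'_le hγ hM hK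
  have hΦL : |phiE' γ xL| ≤ Φ := abs_phiE'_le hγ hM hL
  have hΦ0 : 0 ≤ Φ := le_trans (abs_nonneg _) (le_max_left _ _)
  have hlip : |phiE γ xK - phiE γ xσ| ≤ Φ * |xK - xσ| := phiE_lip hγ hM hK hσi
  have habs : |xL - xK| = |xK - xL| := abs_sub_comm _ _
  have t1 : |phiE γ xK - phiE γ xσ| ≤ Φ * |xK - xL| := by
    refine hlip.trans ?_
    exact mul_le_mul_of_nonneg_left (habs ▸ hd3) hΦ0
  have t2 : |phiE' γ xK * (xKL - xK)| ≤ Φ * |xK - xL| := by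
    rw [abs_mul]
    exact mul_le_mul hΦK (habs ▸ hd1) (abs_nonneg _) hΦ0
  have t3 : |1 / 2 * (phiE' γ xK + phiE' γ xL) * (xσ - xKL)| ≤ Φ * |xK - xL| := by
    rw [abs_mul, abs_mul]
    have h1 : |phiE' γ xK + phiE' γ xL| ≤ 2 * Φ :=
      (abs_add_le _ _).trans (by linarith)
    have : |(1:ℝ) / 2| * |phiE' γ xK + phiE' γ xL| ≤ Φ := by
      rw [abs_of_pos (by norm_num : (0:ℝ) < 1/2)]
      linarith
    exact (mul_le_mul this (habs ▸ hd2) (abs_nonneg _) hΦ0).trans (by nlinarith [abs_nonneg (xK - xL)])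
  calc |dphi (phiE γ) (phiE' γ) xK xL xKL xσ|
      ≤ |phiE γ xK - phiE γ xσ| + |phiE' γ xK * (xKL - xK)|
          + |1 / 2 * (phiE' γ xK + phiE' γ xL) * (xσ - xKL)| := by
        rw [dphi]
        exact (abs_add_le _ _).trans (add_le_add_left (abs_add_le _ _) _)
  _ ≤ Φ * |xK - xL| + Φ * |xK - xL| + Φ * |xK - xL| := by
        exact add_le_add (add_le_add t1 t2) t3
  _ = 3 * Φ * |xK - xL| := by ring

/-- Weak (dual-norm) estimate on the conservative remainder `δR_e` of the renormalized
internal energy balance for the reduced-diffusion scheme (Lemma 2.11). -/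
theorem weak_estimate_energy_remainder
    (γ M : ℝ) (hγ : 1 < γ) (hM : 1 < M)
    (Cell Face : Type*) [Fintype Cell] [Fintype Face] [DecidableEq Cell]
    (Kf Lf : Face → Cell) (hKL : ∀ f, Kf f ≠ Lf f)
    (area : Face → ℝ) (harea : ∀ f, 0 < area f)
    (measK : Cell → ℝ) (hmeas : ∀ Kc, 0 < measK Kc)
    (N : ℕ) (δt : ℝ) (hδt : 0 < δt)
    (uf : Face → ℕ → ℝ) (hu : ∀ f n, n ≤ N → |uf f n| ≤ M)
    (ρf : Face → ℕ → ℝ) (hρf : ∀ f n, n ≤ N → ρf f n ∈ Set.Ioc 0 M)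
    (e : Cell → ℕ → ℝ) (he : ∀ Kc n, n ≤ N → e Kc n ∈ Set.Icc (1 / M) M)
    (eKL ef : Face → ℕ → ℝ)
    (hKLmem : ∀ f n, 1 ≤ n → n ≤ N → eKL f n ∈ Set.uIcc (e (Kf f) n) (e (Lf f) n))
    (hKLtan : ∀ f n, 1 ≤ n → n ≤ N → e (Kf f) n ≠ e (Lf f) n →
      phiE γ (e (Kf f) n) + phiE' γ (e (Kf f) n) * (eKL f n - e (Kf f) n)
        = phiE γ (e (Lf f) n) + phiE' γ (e (Lf f) n) * (eKL f n - e (Lf f) n))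
    (hKLeq : ∀ f n, 1 ≤ n → n ≤ N → e (Kf f) n = e (Lf f) n → eKL f n = e (Kf f) n)
    (hface₁ : ∀ f n, 1 ≤ n → n ≤ N → 0 ≤ uf f n →
      ef f n ∈ Set.uIcc (e (Kf f) n) (eKL f n))
    (hface₂ : ∀ f n, 1 ≤ n → n ≤ N → uf f n < 0 →
      ef f n ∈ Set.uIcc (e (Lf f) n) (eKL f n))
    (h G : ℝ) (hh : 0 < h) (hG : 0 ≤ G)
    (ψ : Cell → ℕ → ℝ)
    (hψ : ∀ f n, n ≤ N → |ψ (Kf f) n - ψ (Lf f) n| ≤ G * h) :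
    |∑ n ∈ Finset.range N, δt * ∑ Kc : Cell,
        (∑ f ∈ cellFaces Kf Lf Kc,
          dphi (phiE γ) (phiE' γ) (e (Kf f) (n + 1)) (e (Lf f) (n + 1))
              (eKL f (n + 1)) (ef f (n + 1)) *
            (area f * ρf f (n + 1) * orientedVel Kf (fun f' => uf f' (n + 1)) Kc f)) *
          ψ Kc (n + 1)|
      ≤ 3 * M ^ 2 * max |phiE' γ (1 / M)| |phiE' γ M| * G * h *
          ∑ n ∈ Finset.range N, δt * ∑ f : Face,
            area f * |e (Kf f) (n + 1) - e (Lf f) (n + 1)| := by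
  set Φ := max |phiE' γ (1 / M)| |phiE' γ M| with hΦ
  have hΦ0 : 0 ≤ Φ := le_trans (abs_nonneg _) (le_max_left _ _)
  have hM0 : (0 : ℝ) < M := lt_trans one_pos hM
  -- per-time-level bound
  have key : ∀ n ∈ Finset.range N,
      |δt * ∑ Kc : Cell,
        (∑ f ∈ cellFaces Kf Lf Kc,
          dphi (phiE γ) (phiE' γ) (e (Kf f) (n + 1)) (e (Lf f) (n + 1))
              (eKL f (n + 1)) (ef f (n + 1)) *
            (area f * ρf f (n + 1) * orientedVel Kf (fun f' => uf f' (n + 1)) Kc f)) *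
          ψ Kc (n + 1)|
      ≤ 3 * M ^ 2 * Φ * G * h *
          (δt * ∑ f : Face, area f * |e (Kf f) (n + 1) - e (Lf f) (n + 1)|) := by
    intro n hn
    have hnN : n + 1 ≤ N := Finset.mem_range.mp hn
    have hn1 : 1 ≤ n + 1 := Nat.le_add_left 1 n
    set g : Face → ℝ := fun f =>
      dphi (phiE γ) (phiE' γ) (e (Kf f) (n + 1)) (e (Lf f) (n + 1))
        (eKL f (n + 1)) (ef f (n + 1)) * (area f * ρf f (n + 1)) with hg
    have hrw : (∑ Kc : Cell,
        (∑ f ∈ cellFaces Kf Lf Kc,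
          dphi (phiE γ) (phiE' γ) (e (Kf f) (n + 1)) (e (Lf f) (n + 1))
              (eKL f (n + 1)) (ef f (n + 1)) *
            (area f * ρf f (n + 1) * orientedVel Kf (fun f' => uf f' (n + 1)) Kc f)) *
          ψ Kc (n + 1))
        = ∑ f : Face, g f * uf f (n + 1) * (ψ (Kf f) (n + 1) - ψ (Lf f) (n + 1)) := by
      rw [← sum_cell_face Kf Lf hKL (fun f => uf f (n + 1)) g (fun Kc => ψ Kc (n + 1))]
      refine Finset.sum_congr rfl fun Kc _ => ?_
      congr 1
      refine Finset.sum_congr rfl fun f _ => ?_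
      rw [hg]; ring
    rw [hrw, abs_mul, abs_of_pos hδt]
    have hface : ∀ f : Face,
        |g f * uf f (n + 1) * (ψ (Kf f) (n + 1) - ψ (Lf f) (n + 1))|
          ≤ 3 * M ^ 2 * Φ * G * h *
              (area f * |e (Kf f) (n + 1) - e (Lf f) (n + 1)|) := by
      intro f
      have heK := he (Kf f) (n + 1) hnN
      have heL := he (Lf f) (n + 1) hnN
      have hKLm := hKLmem f (n + 1) hn1 hnN
      have hσm : ef f (n + 1) ∈ Set.uIcc (e (Kf f) (n + 1)) (e (Lf f) (n + 1)) := by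
        rcases le_or_gt 0 (uf f (n + 1)) with hpos | hneg
        · exact Set.uIcc_subset_uIcc Set.left_mem_uIcc hKLm (hface₁ f (n + 1) hn1 hnN hpos)
        · exact Set.uIcc_subset_uIcc Set.right_mem_uIcc hKLm (hface₂ f (n + 1) hn1 hnN hneg)
      have hdφ : |dphi (phiE γ) (phiE' γ) (e (Kf f) (n + 1)) (e (Lf f) (n + 1))
          (eKL f (n + 1)) (ef f (n + 1))|
            ≤ 3 * Φ * |e (Kf f) (n + 1) - e (Lf f) (n + 1)| :=
        dphi_bound hγ hM heK heL hKLm hσm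
      have hρ := hρf f (n + 1) hnN
      have hρ0 : 0 ≤ ρf f (n + 1) := le_of_lt hρ.1
      have hρM : ρf f (n + 1) ≤ M := hρ.2
      have huM : |uf f (n + 1)| ≤ M := hu f (n + 1) hnN
      have hψM : |ψ (Kf f) (n + 1) - ψ (Lf f) (n + 1)| ≤ G * h := hψ f (n + 1) hnN
      have hga : 0 < area f := harea f
      calc |g f * uf f (n + 1) * (ψ (Kf f) (n + 1) - ψ (Lf f) (n + 1))|
          = |dphi (phiE γ) (phiE' γ) (e (Kf f) (n + 1)) (e (Lf f) (n + 1))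
              (eKL f (n + 1)) (ef f (n + 1))| * (area f * ρf f (n + 1))
              * |uf f (n + 1)| * |ψ (Kf f) (n + 1) - ψ (Lf f) (n + 1)| := by
            rw [hg, abs_mul, abs_mul, abs_mul,
              abs_of_nonneg (mul_nonneg (le_of_lt hga) hρ0)]
      _ ≤ (3 * Φ * |e (Kf f) (n + 1) - e (Lf f) (n + 1)|) * (area f * M) * M * (G * h) := by
            gcongr
      _ = 3 * M ^ 2 * Φ * G * h *
              (area f * |e (Kf f) (n + 1) - e (Lf f) (n + 1)|) := by ring
    calc δt * |∑ f : Face, g f * uf f (n + 1) * (ψ (Kf f) (n + 1) - ψ (Lf f) (n + 1))|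
        ≤ δt * ∑ f : Face, |g f * uf f (n + 1) * (ψ (Kf f) (n + 1) - ψ (Lf f) (n + 1))| :=
          mul_le_mul_of_nonneg_left (Finset.abs_sum_le_sum_abs _ _) hδt.le
    _ ≤ δt * ∑ f : Face, 3 * M ^ 2 * Φ * G * h *
            (area f * |e (Kf f) (n + 1) - e (Lf f) (n + 1)|) :=
          mul_le_mul_of_nonneg_left (Finset.sum_le_sum fun f _ => hface f) hδt.le
    _ = 3 * M ^ 2 * Φ * G * h *
            (δt * ∑ f : Face, area f * |e (Kf f) (n + 1) - e (Lf f) (n + 1)|) := by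
          rw [← Finset.mul_sum]; ring
  calc |∑ n ∈ Finset.range N, δt * ∑ Kc : Cell,
        (∑ f ∈ cellFaces Kf Lf Kc,
          dphi (phiE γ) (phiE' γ) (e (Kf f) (n + 1)) (e (Lf f) (n + 1))
              (eKL f (n + 1)) (ef f (n + 1)) *
            (area f * ρf f (n + 1) * orientedVel Kf (fun f' => uf f' (n + 1)) Kc f)) *
          ψ Kc (n + 1)|
      ≤ ∑ n ∈ Finset.range N, |δt * ∑ Kc : Cell,
        (∑ f ∈ cellFaces Kf Lf Kc,
          dphi (phiE γ) (phiE' γ) (e (Kf f) (n + 1)) (e (Lf f) (n + 1))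
              (eKL f (n + 1)) (ef f (n + 1)) *
            (area f * ρf f (n + 1) * orientedVel Kf (fun f' => uf f' (n + 1)) Kc f)) *
          ψ Kc (n + 1)| := Finset.abs_sum_le_sum_abs _ _
  _ ≤ ∑ n ∈ Finset.range N, 3 * M ^ 2 * Φ * G * h *
          (δt * ∑ f : Face, area f * |e (Kf f) (n + 1) - e (Lf f) (n + 1)|) :=
        Finset.sum_le_sum key
  _ = 3 * M ^ 2 * Φ * G * h *
          ∑ n ∈ Finset.range N, δt * ∑ f : Face,
            area f * |e (Kf f) (n + 1) - e (Lf f) (n + 1)| := by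
        rw [Finset.mul_sum]
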